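/- Let R be a commutative ring with identity, a_{ij} ∈ R for 1 ≤ i,j ≤ n, and let k, l₁,…,l_n, m₁,…,m_n be nonnegative integers with N = kn − ∑_{i=1}^n (l_i + m_i) ≥ 0. Then the coefficient of x₁^k⋯x_n^k in per((a_{ij} x_j^{l_i})) · det((x_j^{m_i})) · (x₁+⋯+x_n)^N equals the coefficient of x₁^k⋯x_n^k in per((a_{ij} x_j^{m_i})) · det((x_j^{l_i})) · (x₁+⋯+x_n)^N. -/

import Mathlib

open MvPolynomial

/-- The permanent of a square matrix. -/
def perMatrix {n : ℕ} {S : Type*} [CommRing S] (M : Matrix (Fin n) (Fin n) S) : S :=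
  ∑ σ : Equiv.Perm (Fin n), ∏ i, M i (σ i)

section Aux

variable {R : Type*} [CommRing R] {n : ℕ}

lemma mapDomain_const (e : Equiv.Perm (Fin n)) (k : ℕ) :
    Finsupp.mapDomain (e : Fin n → Fin n)
        (Finsupp.equivFunOnFinite.symm fun _ : Fin n => k)
      = Finsupp.equivFunOnFinite.symm fun _ : Fin n => k := by
  ext j
  rw [show j = e (e.symm j) by simp, Finsupp.mapDomain_apply e.injective]
  simp [Finsupp.equivFunOnFinite]
  rfl

lemma coeff_K_rename (e : Equiv.Perm (Fin n)) (k : ℕ) (p : MvPolynomial (Fin n) R) :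
    coeff (Finsupp.equivFunOnFinite.symm fun _ : Fin n => k)
      (rename (e : Fin n → Fin n) p)
      = coeff (Finsupp.equivFunOnFinite.symm fun _ : Fin n => k) p := by
  conv_lhs => rw [← mapDomain_const e k]
  exact coeff_rename_mapDomain _ e.injective _ _

lemma expand_lemma (k : ℕ) (a : Fin n → Fin n → R) (l' m' : Fin n → ℕ) (N : ℕ) :
    coeff (Finsupp.equivFunOnFinite.symm fun _ : Fin n => k)
      (perMatrix (Matrix.of fun i j : Fin n => (C (a i j) * X j ^ l' i :
          MvPolynomial (Fin n) R)) *
        Matrix.det (Matrix.of fun i j : Fin n => (X j ^ m' i : MvPolynomial (Fin n) R)) *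
        (∑ s : Fin n, X s) ^ N)
    = ∑ σ : Equiv.Perm (Fin n), ∑ τ : Equiv.Perm (Fin n),
        ((Equiv.Perm.sign τ : ℤ) : R) * (∏ i, a i (σ i)) *
          coeff (Finsupp.equivFunOnFinite.symm fun _ : Fin n => k)
            ((∏ i, X (σ i) ^ l' i) * (∏ i, (X (τ i) : MvPolynomial (Fin n) R) ^ m' i) *
              (∑ s : Fin n, X s) ^ N) := by
  have hper : perMatrix (Matrix.of fun i j : Fin n => (C (a i j) * X j ^ l' i :
      MvPolynomial (Fin n) R))
      = ∑ σ : Equiv.Perm (Fin n), C (∏ i, a i (σ i)) * ∏ i, X (σ i) ^ l' i := by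
    refine Finset.sum_congr rfl fun σ _ => ?_
    rw [map_prod, ← Finset.prod_mul_distrib]
    rfl
  have hdet : Matrix.det (Matrix.of fun i j : Fin n => (X j ^ m' i : MvPolynomial (Fin n) R))
      = ∑ τ : Equiv.Perm (Fin n), (Equiv.Perm.sign τ : ℤ) •
          ∏ i, (X (τ i) : MvPolynomial (Fin n) R) ^ m' i := by
    rw [Matrix.det_apply,
      ← Equiv.sum_comp (Equiv.inv (Equiv.Perm (Fin n)))
        (fun τ : Equiv.Perm (Fin n) => (Equiv.Perm.sign τ : ℤ) •
          ∏ i, (X (τ i) : MvPolynomial (Fin n) R) ^ m' i)]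
    refine Finset.sum_congr rfl fun τ _ => ?_
    have h1 : ∏ i, (X ((Equiv.inv (Equiv.Perm (Fin n)) τ) i) : MvPolynomial (Fin n) R) ^ m' i
        = ∏ i, (Matrix.of fun i j : Fin n => (X j ^ m' i : MvPolynomial (Fin n) R)) (τ i) i := by
      rw [← Equiv.prod_comp τ
        (fun i => (X ((Equiv.inv (Equiv.Perm (Fin n)) τ) i) : MvPolynomial (Fin n) R) ^ m' i)]
      simp [Equiv.inv]
    rw [h1]
    simp [Equiv.inv, Units.smul_def]
  rw [hper, hdet, Finset.sum_mul_sum, Finset.sum_mul, coeff_sum]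
  refine Finset.sum_congr rfl fun σ _ => ?_
  rw [Finset.sum_mul, coeff_sum]
  refine Finset.sum_congr rfl fun τ _ => ?_
  rw [mul_smul_comm, smul_mul_assoc, coeff_smul, mul_assoc (C (∏ i, a i (σ i))),
    mul_assoc (C (∏ i, a i (σ i))), coeff_C_mul]
  rw [zsmul_eq_mul, ← mul_assoc, mul_assoc ((Equiv.Perm.sign τ : ℤ) : R)]

end Aux

/-- Theorem 3.3(ii), equation (3.6). -/
theorem stmt15 {R : Type*} [CommRing R] (n k : ℕ)
    (a : Fin n → Fin n → R) (l m : Fin n → ℕ) (N : ℕ)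
    (hN : N = k * n - ∑ i, (l i + m i)) (hge : ∑ i, (l i + m i) ≤ k * n) :
    MvPolynomial.coeff (Finsupp.equivFunOnFinite.symm fun _ : Fin n => k)
      (perMatrix (Matrix.of fun i j : Fin n => (C (a i j) * X j ^ l i :
          MvPolynomial (Fin n) R)) *
        Matrix.det (Matrix.of fun i j : Fin n => (X j ^ m i : MvPolynomial (Fin n) R)) *
        (∑ s : Fin n, X s) ^ N)
      =
    MvPolynomial.coeff (Finsupp.equivFunOnFinite.symm fun _ : Fin n => k)
      (perMatrix (Matrix.of fun i j : Fin n => (C (a i j) * X j ^ m i :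
          MvPolynomial (Fin n) R)) *
        Matrix.det (Matrix.of fun i j : Fin n => (X j ^ l i : MvPolynomial (Fin n) R)) *
        (∑ s : Fin n, X s) ^ N) := by
  rw [expand_lemma k a l m N, expand_lemma k a m l N]
  refine Finset.sum_congr rfl fun σ _ => ?_
  have hinv : Function.Involutive (fun τ : Equiv.Perm (Fin n) => σ * τ⁻¹ * σ) := by
    intro τ; group
  rw [← Equiv.sum_comp (Function.Involutive.toPerm _ hinv)
    (fun τ : Equiv.Perm (Fin n) =>
      ((Equiv.Perm.sign τ : ℤ) : R) * (∏ i, a i (σ i)) *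
        coeff (Finsupp.equivFunOnFinite.symm fun _ : Fin n => k)
          ((∏ i, X (σ i) ^ m i) * (∏ i, (X (τ i) : MvPolynomial (Fin n) R) ^ l i) *
            (∑ s : Fin n, X s) ^ N))]
  refine Finset.sum_congr rfl fun τ _ => ?_
  simp only [Function.Involutive.coe_toPerm]
  have hsgn : Equiv.Perm.sign (σ * τ⁻¹ * σ) = Equiv.Perm.sign τ := by
    rw [Equiv.Perm.sign_mul, Equiv.Perm.sign_mul, Equiv.Perm.sign_inv,
      mul_comm (Equiv.Perm.sign σ), mul_assoc, Int.units_mul_self, mul_one]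
  rw [hsgn]
  congr 1
  have hS : rename ((τ * σ⁻¹ : Equiv.Perm (Fin n)) : Fin n → Fin n)
      ((∑ s : Fin n, X s : MvPolynomial (Fin n) R)) = ∑ s : Fin n, X s := by
    rw [map_sum]
    simp only [rename_X]
    exact Equiv.sum_comp (τ * σ⁻¹) X
  rw [← coeff_K_rename (τ * σ⁻¹) k ((∏ i, X (σ i) ^ m i) *
      (∏ i, (X ((σ * τ⁻¹ * σ) i) : MvPolynomial (Fin n) R) ^ l i) * (∑ s : Fin n, X s) ^ N)]
  congr 1
  rw [map_mul, map_mul, map_pow, hS, map_prod, map_prod]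
  simp only [map_pow, rename_X, Equiv.Perm.coe_mul, Function.comp_apply,
    Equiv.Perm.inv_def, Equiv.symm_apply_apply, Equiv.apply_symm_apply]
  ring
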